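/- arXiv:1506.09029 — 3 statements merged into one kernel-verified Lean document; each statement's English description precedes it below -/
import Mathlib

section
/- There exists a constant C > 0 such that for all r₀ ≥ 0 and all θ ∈ ℝ, the integral ∫_{-π}^{π} exp(-r₀(1 - cos(θ - θ₀))) dθ₀ is at most C/(1 + r₀^{1/2}). -/
open Real MeasureTheory

/-- There is C > 0 such that for all r₀ ≥ 0 and θ ∈ ℝ,
∫_{-π}^{π} exp(-r₀(1 - cos(θ - θ₀))) dθ₀ ≤ C / (1 + √r₀). -/
theorem stmt3 :
    ∃ C > 0, ∀ r₀ : ℝ, 0 ≤ r₀ → ∀ θ : ℝ,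
      (∫ θ₀ in (-π)..π, Real.exp (-r₀ * (1 - Real.cos (θ - θ₀)))) ≤
        C / (1 + Real.sqrt r₀) := by
  refine ⟨2 * π + 4, by positivity, fun r₀ hr θ => ?_⟩
  set f : ℝ → ℝ := fun u => Real.exp (-r₀ * (1 - Real.cos u)) with hf
  have hfc : Continuous f := by fun_prop
  have hper : Function.Periodic f (2 * π) := fun x => by
    simp [hf, Real.cos_add_two_pi]
  -- rewrite the integral as an integral over one period
  have h1 : (∫ θ₀ in (-π)..π, Real.exp (-r₀ * (1 - Real.cos (θ - θ₀))))
      = ∫ u in (-π)..π, f u := by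
    have h2 := intervalIntegral.integral_comp_sub_left (a := -π) (b := π) f θ
    have h3 := hper.intervalIntegral_add_eq (θ - π) (-π)
    rw [show θ - π + 2 * π = θ + π by ring, show -π + 2 * π = π by ring] at h3
    rw [show θ - -π = θ + π by ring] at h2
    rw [h2, h3]
  rw [h1]
  set I := ∫ u in (-π)..π, f u with hI
  have hint : IntervalIntegrable f volume (-π) π := hfc.intervalIntegrable _ _
  have hf1 : ∀ u, f u ≤ 1 := fun u => by
    rw [hf]
    simp only
    rw [Real.exp_le_one_iff]
    nlinarith [Real.cos_le_one u, hr]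
  have hIle : I ≤ 2 * π := by
    calc I ≤ ∫ _ in (-π)..π, (1 : ℝ) :=
          intervalIntegral.integral_mono_on (by linarith [Real.pi_pos]) hint
            (intervalIntegrable_const) (fun x _ => hf1 x)
      _ = 2 * π := by simp; ring
  have hI0 : 0 ≤ I := intervalIntegral.integral_nonneg (by linarith [Real.pi_pos])
    (fun u _ => (Real.exp_pos _).le)
  have hsq : 0 ≤ Real.sqrt r₀ := Real.sqrt_nonneg _
  rw [le_div_iff₀ (by positivity)]
  -- it suffices to bound I * sqrt r₀ by 4
  have key : I * Real.sqrt r₀ ≤ 4 := by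
    rcases eq_or_lt_of_le hr with h0 | hpos
    · rw [← h0]
      simp
    · set a : ℝ := 2 / π ^ 2 * r₀ with ha
      have hapos : 0 < a := by positivity
      have hgb : ∀ u ∈ Set.Icc (-π) π, f u ≤ Real.exp (-a * u ^ 2) := by
        intro u hu
        rw [hf]
        simp only
        apply Real.exp_le_exp.2
        have habs : |u| ≤ π := abs_le.2 ⟨hu.1, hu.2⟩
        have := Real.cos_le_one_sub_mul_cos_sq habs
        nlinarith
      have hgint : IntervalIntegrable (fun u => Real.exp (-a * u ^ 2)) volume (-π) π :=
        (Continuous.intervalIntegrable (by fun_prop) _ _)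
      have hstep1 : I ≤ ∫ u in (-π)..π, Real.exp (-a * u ^ 2) :=
        intervalIntegral.integral_mono_on (by linarith [Real.pi_pos]) hint hgint hgb
      have hstep2 : (∫ u in (-π)..π, Real.exp (-a * u ^ 2)) ≤ ∫ u : ℝ, Real.exp (-a * u ^ 2) := by
        rw [intervalIntegral.integral_of_le (by linarith [Real.pi_pos])]
        exact setIntegral_le_integral (integrable_exp_neg_mul_sq hapos)
          (Filter.Eventually.of_forall fun u => (Real.exp_pos _).le)
      have hgauss : (∫ u : ℝ, Real.exp (-a * u ^ 2)) = Real.sqrt (π / a) :=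
        integral_gaussian a
      have hIle2 : I ≤ Real.sqrt (π / a) := by
        rw [← hgauss]; exact hstep1.trans hstep2
      have : I * Real.sqrt r₀ ≤ Real.sqrt (π / a) * Real.sqrt r₀ :=
        mul_le_mul_of_nonneg_right hIle2 hsq
      refine this.trans ?_
      rw [← Real.sqrt_mul (by positivity)]
      have hval : π / a * r₀ = π ^ 3 / 2 := by
        rw [ha]; field_simp
      rw [hval]
      rw [show (4 : ℝ) = Real.sqrt 16 by
        rw [show (16 : ℝ) = 4 ^ 2 by norm_num, Real.sqrt_sq (by norm_num)]]
      apply Real.sqrt_le_sqrt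
      nlinarith [Real.pi_lt_d2, Real.pi_gt_three]
  nlinarith [key, hIle, hsq, hI0]
end

section
/- With W(x,x₀) = (1/2π) e^{r - r₀} K₀(r₁) as above, there exists a constant C such that for all x ≠ x₀ with r₁ ≥ 1, the radial derivative satisfies |e_r · ∇_x W(x, x₀)| ≤ C r₁^{-3/2} e^{(r - r₁ - r₀)/2}. -/
open Real MeasureTheory

/-- The modified Bessel function of the second kind of order 0. -/
noncomputable def K0 (r : ℝ) : ℝ :=
  ∫ t in Set.Ioi (0 : ℝ), Real.exp (-r * Real.cosh t)

/-- The Green function W(x, x₀) = (1/2π) e^{‖x‖ - ‖x₀‖} K₀(‖x - x₀‖). -/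
noncomputable def W (x x₀ : EuclideanSpace ℝ (Fin 2)) : ℝ :=
  (1 / (2 * π)) * Real.exp (‖x‖ - ‖x₀‖) * K0 ‖x - x₀‖

section Aux
open Set

noncomputable def K1fn (r : ℝ) : ℝ :=
  ∫ t in Set.Ioi (0 : ℝ), Real.cosh t * Real.exp (-r * Real.cosh t)


lemma aux_ue {a u : ℝ} (ha : 0 < a) : u * Real.exp (-(a*u)) ≤ 1/a := by
  rw [le_div_iff₀ ha]
  have h1 : a * u ≤ Real.exp (a*u) := le_trans (by linarith) (Real.add_one_le_exp _)
  have h2 : (0:ℝ) < Real.exp (-(a*u)) := Real.exp_pos _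
  calc u * Real.exp (-(a*u)) * a = (a*u) * Real.exp (-(a*u)) := by ring
    _ ≤ Real.exp (a*u) * Real.exp (-(a*u)) := by nlinarith
    _ = 1 := by rw [← Real.exp_add]; simp

lemma cosh_ge_half (t : ℝ) (ht : 0 ≤ t) : 1/2 + t/2 ≤ Real.cosh t := by
  have h1 : (1:ℝ) ≤ Real.cosh t := Real.one_le_cosh t
  have h2 : t ≤ Real.sinh t := Real.self_le_sinh_iff.2 ht
  have h3 : Real.sinh t ≤ Real.cosh t := by
    have := Real.cosh_sub_sinh t
    nlinarith [Real.exp_pos (-t)]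
  linarith

lemma cosh_ge_quad (t : ℝ) : 1 + t^2/2 ≤ Real.cosh t := by
  have h2 : Real.cosh t = 2 * Real.sinh (t/2)^2 + 1 := by
    have h := Real.cosh_two_mul (t/2)
    have ht : 2 * (t/2) = t := by ring
    rw [ht] at h
    rw [h, Real.cosh_sq (t/2)]; ring
  rcases le_total 0 t with ht | ht
  · have : t/2 ≤ Real.sinh (t/2) := Real.self_le_sinh_iff.2 (by linarith)
    nlinarith
  · have : Real.sinh (t/2) ≤ t/2 := Real.sinh_le_self_iff.2 (by linarith)
    nlinarith

lemma intK0 {s : ℝ} (hs : 0 < s) :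
    IntegrableOn (fun t => Real.exp (-s * Real.cosh t)) (Ioi (0:ℝ)) := by
  have hg : IntegrableOn (fun t => Real.exp (-(s/2)) * Real.exp (-(s/2) * t)) (Ioi (0:ℝ)) :=
    (exp_neg_integrableOn_Ioi 0 (by linarith : (0:ℝ) < s/2)).const_mul _
  refine hg.mono' ?_ ?_
  · exact (Continuous.aestronglyMeasurable (by continuity)).restrict
  · rw [ae_restrict_iff' measurableSet_Ioi]
    filter_upwards with t ht
    have h1 := cosh_ge_half t (le_of_lt ht)
    rw [norm_of_nonneg (Real.exp_nonneg _), ← Real.exp_add]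
    apply Real.exp_le_exp.2
    nlinarith

lemma intK1 {s : ℝ} (hs : 0 < s) :
    IntegrableOn (fun t => Real.cosh t * Real.exp (-s * Real.cosh t)) (Ioi (0:ℝ)) := by
  have hg : IntegrableOn (fun t => (2/s) * Real.exp (-(s/2) * Real.cosh t)) (Ioi (0:ℝ)) :=
    (intK0 (by linarith : (0:ℝ) < s/2)).const_mul _
  refine hg.mono' ?_ ?_
  · exact (Continuous.aestronglyMeasurable (by continuity)).restrict
  · filter_upwards with t
    have hc : (0:ℝ) < Real.cosh t := Real.cosh_pos t
    have h2 : Real.cosh t * Real.exp (-((s/2) * Real.cosh t)) ≤ 1/(s/2) :=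
      aux_ue (by linarith)
    rw [norm_of_nonneg (by positivity)]
    have : -s * Real.cosh t = -((s/2) * Real.cosh t) + (-(s/2) * Real.cosh t) := by ring
    rw [this, Real.exp_add, ← mul_assoc]
    have h3 : (1:ℝ)/(s/2) = 2/s := by ring
    rw [h3] at h2
    exact mul_le_mul_of_nonneg_right h2 (Real.exp_nonneg _)

lemma K0_hasDerivAt {r : ℝ} (hr : 0 < r) : HasDerivAt K0 (-(K1fn r)) r := by
  have h := hasDerivAt_integral_of_dominated_loc_of_deriv_le
    (F := fun s t => Real.exp (-s * Real.cosh t))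
    (F' := fun s t => -(Real.cosh t * Real.exp (-s * Real.cosh t)))
    (x₀ := r) (s := Metric.ball r (r/2))
    (μ := volume.restrict (Ioi (0:ℝ)))
    (bound := fun t => Real.cosh t * Real.exp (-(r/2) * Real.cosh t))
    (Metric.ball_mem_nhds r (by linarith))
    (Filter.Eventually.of_forall fun s =>
      (Continuous.aestronglyMeasurable (by continuity)).restrict)
    (intK0 hr)
    ((Continuous.aestronglyMeasurable (by continuity)).restrict)
    ?_ (intK1 (by linarith)) ?_
  · have h2 := h.2
    have : -(K1fn r) = ∫ t in Ioi (0:ℝ), -(Real.cosh t * Real.exp (-r * Real.cosh t)) := by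
      rw [integral_neg]; rfl
    rw [this]
    exact h2
  · filter_upwards with t
    intro s hs
    rw [Metric.mem_ball, Real.dist_eq, abs_lt] at hs
    have hc : (1:ℝ) ≤ Real.cosh t := Real.one_le_cosh t
    rw [norm_neg, norm_of_nonneg (by positivity)]
    apply mul_le_mul_of_nonneg_left _ (by linarith)
    apply Real.exp_le_exp.2
    nlinarith
  · filter_upwards with t
    intro s hs
    have hd : HasDerivAt (fun u : ℝ => -(u * Real.cosh t)) (-(Real.cosh t)) s :=
      (hasDerivAt_mul_const (Real.cosh t)).neg
    have h2 := hd.exp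
    have he : (fun u : ℝ => Real.exp (-(u * Real.cosh t))) = fun u : ℝ => Real.exp (-u * Real.cosh t) := by
      funext u; rw [neg_mul]
    rw [he] at h2
    refine h2.congr_deriv ?_
    rw [neg_mul]; ring

lemma K1_nonneg {s : ℝ} : 0 ≤ K1fn s :=
  setIntegral_nonneg measurableSet_Ioi fun t _ => by positivity

lemma K0_le_K1 {s : ℝ} (hs : 0 < s) : K0 s ≤ K1fn s := by
  refine setIntegral_mono_on (intK0 hs) (intK1 hs) measurableSet_Ioi fun t _ => ?_
  nlinarith [Real.one_le_cosh t, Real.exp_pos (-s * Real.cosh t)]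

lemma gauss_bound {s : ℝ} (hs : 1 ≤ s) :
    (∫ t in Ioi (0:ℝ), Real.exp (-(s/4) * t^2)) ≤ 2 / Real.sqrt s := by
  rw [integral_gaussian_Ioi]
  have hs0 : (0:ℝ) < s := by linarith
  have h1 : π / (s/4) ≤ 16 / s := by
    rw [div_le_div_iff₀ (by positivity) hs0]
    nlinarith [Real.pi_le_four]
  have h2 : Real.sqrt (π / (s/4)) ≤ Real.sqrt (16/s) := Real.sqrt_le_sqrt h1
  have h3 : Real.sqrt (16/s) = 4 / Real.sqrt s := by
    rw [Real.sqrt_div (by norm_num : (0:ℝ) ≤ 16) s,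
      show (16:ℝ) = 4^2 by norm_num, Real.sqrt_sq (by norm_num : (0:ℝ) ≤ 4)]
  have hss : 0 < Real.sqrt s := Real.sqrt_pos.2 hs0
  rw [h3] at h2
  have h4 : (4 / Real.sqrt s) / 2 = 2 / Real.sqrt s := by ring
  linarith

lemma claimA {s t : ℝ} (hs : 1 ≤ s) :
    Real.cosh t * Real.exp (-s * Real.cosh t) ≤
      6 * Real.exp (-s) * Real.exp (-(s/4) * t^2) := by
  set c := Real.cosh t with hc
  have hc1 : 1 ≤ c := Real.one_le_cosh t
  have hq : 1 + t^2/2 ≤ c := cosh_ge_quad t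
  have h1 : c * Real.exp (-((1/2)*(c-1))) ≤ 6 := by
    have ha : c * Real.exp (-((1/2:ℝ)*c)) ≤ 1/(1/2) := aux_ue (by norm_num)
    have he : Real.exp (1/2) ≤ 3 := by
      have := Real.exp_one_lt_d9.le
      calc Real.exp (1/2) ≤ Real.exp 1 := Real.exp_le_exp.2 (by norm_num)
        _ ≤ 3 := by linarith
    have : c * Real.exp (-((1/2)*(c-1))) = Real.exp (1/2) * (c * Real.exp (-((1/2:ℝ)*c))) := by
      rw [mul_comm (Real.exp (1/2)), mul_assoc, ← Real.exp_add]; ring_nf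
    rw [this]
    have hpos : 0 ≤ c * Real.exp (-((1/2:ℝ)*c)) := by positivity
    nlinarith [Real.exp_pos ((1:ℝ)/2)]
  have h2 : Real.exp (-((s-1/2)*(c-1))) ≤ Real.exp (-(s/4) * t^2) := by
    apply Real.exp_le_exp.2
    nlinarith
  have hsplit : Real.exp (-s * c) =
      Real.exp (-((1/2)*(c-1))) * Real.exp (-((s-1/2)*(c-1))) * Real.exp (-s) := by
    rw [← Real.exp_add, ← Real.exp_add]; ring_nf
  calc c * Real.exp (-s * c)
      = (c * Real.exp (-((1/2)*(c-1)))) * Real.exp (-((s-1/2)*(c-1))) * Real.exp (-s) := by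
        rw [hsplit]; ring
    _ ≤ 6 * Real.exp (-(s/4) * t^2) * Real.exp (-s) := by
        apply mul_le_mul_of_nonneg_right _ (Real.exp_nonneg _)
        exact mul_le_mul h1 h2 (Real.exp_nonneg _) (by norm_num)
    _ = 6 * Real.exp (-s) * Real.exp (-(s/4) * t^2) := by ring

lemma claimB {s t : ℝ} (hs : 1 ≤ s) :
    (Real.cosh t - 1) * Real.exp (-s * Real.cosh t) ≤
      (2/s) * Real.exp (-s) * Real.exp (-(s/4) * t^2) := by
  set c := Real.cosh t with hc
  have hc1 : 1 ≤ c := Real.one_le_cosh t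
  have hq : 1 + t^2/2 ≤ c := cosh_ge_quad t
  have h1 : (c-1) * Real.exp (-((s/2)*(c-1))) ≤ 2/s := by
    have := aux_ue (a := s/2) (u := c-1) (by linarith)
    calc (c-1) * Real.exp (-((s/2)*(c-1))) ≤ 1/(s/2) := this
      _ = 2/s := by ring
  have h2 : Real.exp (-((s/2)*(c-1))) ≤ Real.exp (-(s/4) * t^2) := by
    apply Real.exp_le_exp.2
    nlinarith
  have hsplit : Real.exp (-s * c) =
      Real.exp (-((s/2)*(c-1))) * Real.exp (-((s/2)*(c-1))) * Real.exp (-s) := by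
    rw [← Real.exp_add, ← Real.exp_add]; ring_nf
  calc (c-1) * Real.exp (-s * c)
      = ((c-1) * Real.exp (-((s/2)*(c-1)))) * Real.exp (-((s/2)*(c-1))) * Real.exp (-s) := by
        rw [hsplit]; ring
    _ ≤ (2/s) * Real.exp (-(s/4) * t^2) * Real.exp (-s) := by
        apply mul_le_mul_of_nonneg_right _ (Real.exp_nonneg _)
        exact mul_le_mul h1 h2 (Real.exp_nonneg _) (by positivity)
    _ = (2/s) * Real.exp (-s) * Real.exp (-(s/4) * t^2) := by ring

lemma intGauss {s : ℝ} (hs : 1 ≤ s) :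
    IntegrableOn (fun t => Real.exp (-(s/4) * t^2)) (Ioi (0:ℝ)) :=
  (integrable_exp_neg_mul_sq (by linarith : (0:ℝ) < s/4)).integrableOn

lemma B1 {s : ℝ} (hs : 1 ≤ s) : K1fn s ≤ 12 * (Real.exp (-s) / Real.sqrt s) := by
  have h0 : (0:ℝ) < s := by linarith
  have step : K1fn s ≤ ∫ t in Ioi (0:ℝ), 6 * Real.exp (-s) * Real.exp (-(s/4) * t^2) := by
    refine setIntegral_mono_on (intK1 h0) (((intGauss hs).const_mul _)) measurableSet_Ioi
      fun t _ => claimA hs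
  rw [integral_const_mul _ _] at step
  have hg := gauss_bound hs
  have hss : 0 < Real.sqrt s := Real.sqrt_pos.2 h0
  calc K1fn s ≤ 6 * Real.exp (-s) * ∫ t in Ioi (0:ℝ), Real.exp (-(s/4) * t^2) := step
    _ ≤ 6 * Real.exp (-s) * (2 / Real.sqrt s) := by
        apply mul_le_mul_of_nonneg_left hg (by positivity)
    _ = 12 * (Real.exp (-s) / Real.sqrt s) := by ring

lemma B2 {s : ℝ} (hs : 1 ≤ s) :
    K1fn s - K0 s ≤ 4 * (Real.exp (-s) / (s * Real.sqrt s)) := by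
  have h0 : (0:ℝ) < s := by linarith
  have hsub : K1fn s - K0 s
      = ∫ t in Ioi (0:ℝ), (Real.cosh t - 1) * Real.exp (-s * Real.cosh t) := by
    rw [K1fn, K0, ← integral_sub (intK1 h0) (intK0 h0)]
    congr 1; funext t; ring
  have hint : IntegrableOn
      (fun t => (Real.cosh t - 1) * Real.exp (-s * Real.cosh t)) (Ioi (0:ℝ)) := by
    refine IntegrableOn.congr_fun ((intK1 h0).sub (intK0 h0)) ?_ measurableSet_Ioi
    intro t _; simp [sub_mul]
  have step : (∫ t in Ioi (0:ℝ), (Real.cosh t - 1) * Real.exp (-s * Real.cosh t))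
      ≤ ∫ t in Ioi (0:ℝ), (2/s) * Real.exp (-s) * Real.exp (-(s/4) * t^2) := by
    refine setIntegral_mono_on hint (((intGauss hs).const_mul _)) measurableSet_Ioi
      fun t _ => claimB hs
  rw [integral_const_mul _ _] at step
  have hg := gauss_bound hs
  have hss : 0 < Real.sqrt s := Real.sqrt_pos.2 h0
  rw [hsub]
  calc (∫ t in Ioi (0:ℝ), (Real.cosh t - 1) * Real.exp (-s * Real.cosh t))
      ≤ (2/s) * Real.exp (-s) * (2 / Real.sqrt s) := by
        refine step.trans (mul_le_mul_of_nonneg_left hg (by positivity))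
    _ = 4 * (Real.exp (-s) / (s * Real.sqrt s)) := by field_simp; ring

lemma hasFDerivAt_norm_self {E : Type*} [NormedAddCommGroup E] [InnerProductSpace ℝ E]
    {x : E} (hx : x ≠ 0) :
    HasFDerivAt (fun y : E => ‖y‖) (‖x‖⁻¹ • (innerSL ℝ x)) x := by
  have h1 : HasFDerivAt (fun y : E => ‖y‖^2) (2 • (innerSL ℝ x)) x :=
    (hasStrictFDerivAt_norm_sq x).hasFDerivAt
  have hx' : ‖x‖ ≠ 0 := norm_ne_zero_iff.2 hx
  have hne : ‖x‖^2 ≠ 0 := pow_ne_zero _ hx'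
  have h2 := h1.sqrt hne
  have hfun : (fun y : E => Real.sqrt (‖y‖^2)) = fun y : E => ‖y‖ :=
    funext fun y => Real.sqrt_sq (norm_nonneg y)
  rw [hfun] at h2
  convert h2 using 1
  rw [Real.sqrt_sq (norm_nonneg x)]
  ext y
  simp only [ContinuousLinearMap.smul_apply, ContinuousLinearMap.coe_smul', Pi.smul_apply,
    smul_eq_mul]
  field_simp
  ring

set_option maxHeartbeats 1600000 in
/-- There is C such that for all x ≠ x₀ with x ≠ 0 and r₁ = ‖x - x₀‖ ≥ 1,
|e_r · ∇_x W(x,x₀)| ≤ C r₁^{-3/2} e^{(r - r₁ - r₀)/2}. -/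
theorem stmt11 :
    ∃ C : ℝ, ∀ x x₀ : EuclideanSpace ℝ (Fin 2), x ≠ x₀ → x ≠ 0 →
      1 ≤ ‖x - x₀‖ →
      |fderiv ℝ (fun y => W y x₀) x ((‖x‖)⁻¹ • x)| ≤
        C * ‖x - x₀‖ ^ (-(3 / 2 : ℝ)) *
          Real.exp ((‖x‖ - ‖x - x₀‖ - ‖x₀‖) / 2) := by
  use 5
  intro x x₀ hxx hx0 hr1
  set r := ‖x‖ with hrdef
  set r₀ := ‖x₀‖ with hr0def
  set r₁ := ‖x - x₀‖ with hr1def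
  have hr1pos : (0:ℝ) < r₁ := lt_of_lt_of_le one_pos hr1
  have hrpos : (0:ℝ) < r := norm_pos_iff.2 hx0
  have hsub : x - x₀ ≠ 0 := sub_ne_zero.2 hxx
  -- derivative assembly
  have hN : HasFDerivAt (fun y : EuclideanSpace ℝ (Fin 2) => ‖y‖) (r⁻¹ • innerSL ℝ x) x :=
    hasFDerivAt_norm_self hx0
  have hM : HasFDerivAt (fun y : EuclideanSpace ℝ (Fin 2) => ‖y - x₀‖)
      (r₁⁻¹ • innerSL ℝ (x - x₀)) x := by
    have h := (hasFDerivAt_norm_self hsub).comp x ((hasFDerivAt_id x).sub_const x₀)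
    simpa [Function.comp_def] using h
  have hA : HasFDerivAt (fun y : EuclideanSpace ℝ (Fin 2) => Real.exp (‖y‖ - r₀))
      (Real.exp (r - r₀) • (r⁻¹ • innerSL ℝ x)) x := by
    have h := (Real.hasDerivAt_exp (r - r₀)).comp_hasFDerivAt x (hN.sub_const r₀)
    simpa [Function.comp_def] using h
  have hB : HasFDerivAt (fun y : EuclideanSpace ℝ (Fin 2) => K0 ‖y - x₀‖)
      ((-(K1fn r₁)) • (r₁⁻¹ • innerSL ℝ (x - x₀))) x := by
    have h := (K0_hasDerivAt hr1pos).comp_hasFDerivAt x hM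
    simpa [Function.comp_def] using h
  have hAB := hA.mul hB
  have hW : HasFDerivAt (fun y => W y x₀)
      ((1/(2*π)) • (Real.exp (r - r₀) • ((-(K1fn r₁)) • (r₁⁻¹ • innerSL ℝ (x - x₀)))
        + K0 r₁ • (Real.exp (r - r₀) • (r⁻¹ • innerSL ℝ x)))) x := by
    have h := hAB.const_mul (1/(2*π))
    have hfun : (fun y => W y x₀) =
        fun y : EuclideanSpace ℝ (Fin 2) =>
          (1/(2*π)) * (Real.exp (‖y‖ - r₀) * K0 ‖y - x₀‖) := by
      funext y; simp only [W]; ring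
    rw [hfun]
    exact h
  set ip : ℝ := inner ℝ (x - x₀) x with hipdef
  set A : ℝ := r₁⁻¹ * (r⁻¹ * ip) with hAdef
  have hval : fderiv ℝ (fun y => W y x₀) x ((‖x‖)⁻¹ • x) =
      (1/(2*π)) * (Real.exp (r - r₀) * (K0 r₁ - A * K1fn r₁)) := by
    have e1 : (innerSL ℝ x : EuclideanSpace ℝ (Fin 2) →L[ℝ] ℝ) ((‖x‖)⁻¹ • x) = r := by
      simp only [innerSL_apply_apply, real_inner_smul_right, real_inner_self_eq_norm_mul_norm]
      rw [← hrdef]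
      field_simp
    have e2 : (innerSL ℝ (x - x₀) : EuclideanSpace ℝ (Fin 2) →L[ℝ] ℝ) ((‖x‖)⁻¹ • x)
        = r⁻¹ * ip := by
      simp only [innerSL_apply_apply, real_inner_smul_right, ← hipdef, ← hrdef]
    rw [hW.fderiv]
    simp only [ContinuousLinearMap.add_apply, ContinuousLinearMap.smul_apply, smul_eq_mul,
      e1, e2]
    rw [inv_mul_cancel₀ hrpos.ne']
    simp only [hAdef]
    ring
  rw [hval]
  -- geometry
  have hip : |ip| ≤ r₁ * r := by rw [hipdef]; exact abs_real_inner_le_norm _ _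
  have hA1 : |A| ≤ 1 := by
    have h : |A| = |ip| / (r₁ * r) := by
      rw [hAdef, abs_mul, abs_mul, abs_inv, abs_inv, abs_of_nonneg hr1pos.le,
        abs_of_nonneg hrpos.le]
      field_simp
    rw [h, div_le_one (by positivity)]
    exact hip
  have hid : 2 * ip = r^2 + r₁^2 - r₀^2 := by
    have h := norm_sub_sq_real x (x - x₀)
    rw [sub_sub_cancel] at h
    rw [hipdef, real_inner_comm]
    linarith
  have htri : r ≤ r₀ + r₁ := by
    calc r = ‖x₀ + (x - x₀)‖ := by rw [add_sub_cancel]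
      _ ≤ r₀ + r₁ := norm_add_le _ _
  have htri2 : r₀ ≤ r + r₁ := by
    calc r₀ = ‖x - (x - x₀)‖ := by rw [sub_sub_cancel]
      _ ≤ r + r₁ := norm_sub_le _ _
  set δ := r₀ + r₁ - r with hδdef
  have hδ : 0 ≤ δ := by rw [hδdef]; linarith
  have h1A : 1 - A ≤ δ / r₁ := by
    rw [le_div_iff₀ hr1pos]
    have hAr : A * (r₁ * r) = ip := by rw [hAdef]; field_simp
    nlinarith [mul_nonneg hδ (by linarith : (0:ℝ) ≤ r + r₁ - r₀)]
  have hK01 := K0_le_K1 hr1pos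
  have hK1n : (0:ℝ) ≤ K1fn r₁ := K1_nonneg
  have hA1' : A ≤ 1 := le_of_abs_le hA1
  have habs : |K0 r₁ - A * K1fn r₁| ≤ (K1fn r₁ - K0 r₁) + (1 - A) * K1fn r₁ := by
    rw [abs_le]
    constructor
    · nlinarith [mul_nonneg (by linarith : (0:ℝ) ≤ 1 - A) hK1n]
    · nlinarith [mul_nonneg (by linarith : (0:ℝ) ≤ 1 - A) hK1n]
  have hb1 := B1 hr1
  have hb2 := B2 hr1
  have hs1 : (0:ℝ) < Real.sqrt r₁ := Real.sqrt_pos.2 hr1pos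
  have hEδ : Real.exp (r - r₀) * Real.exp (-r₁) = Real.exp (-δ) := by
    rw [← Real.exp_add]
    congr 1
    rw [hδdef]; ring
  have hEhalf : Real.exp (-δ) ≤ Real.exp (-δ/2) := Real.exp_le_exp.2 (by linarith)
  have hT1 : Real.exp (r - r₀) * (K1fn r₁ - K0 r₁)
      ≤ 4 * Real.exp (-δ/2) / (r₁ * Real.sqrt r₁) := by
    calc Real.exp (r - r₀) * (K1fn r₁ - K0 r₁)
        ≤ Real.exp (r - r₀) * (4 * (Real.exp (-r₁) / (r₁ * Real.sqrt r₁))) :=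
          mul_le_mul_of_nonneg_left hb2 (Real.exp_nonneg _)
      _ = 4 * (Real.exp (r - r₀) * Real.exp (-r₁)) / (r₁ * Real.sqrt r₁) := by ring
      _ = 4 * Real.exp (-δ) / (r₁ * Real.sqrt r₁) := by rw [hEδ]
      _ ≤ 4 * Real.exp (-δ/2) / (r₁ * Real.sqrt r₁) :=
          div_le_div_of_nonneg_right (by linarith) (by positivity)
  have hδe : δ * Real.exp (-δ/2) ≤ 2 := by
    have h := aux_ue (a := 1/2) (u := δ) (by norm_num)
    rw [show -((1/2:ℝ)*δ) = -δ/2 by ring] at h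
    linarith
  have hT2 : Real.exp (r - r₀) * ((1 - A) * K1fn r₁)
      ≤ 24 * Real.exp (-δ/2) / (r₁ * Real.sqrt r₁) := by
    have step1 : (1 - A) * K1fn r₁ ≤ (δ / r₁) * (12 * (Real.exp (-r₁) / Real.sqrt r₁)) := by
      rcases le_or_gt (1 - A) 0 with h | h
      · have h2 : (1 - A) * K1fn r₁ ≤ 0 := mul_nonpos_of_nonpos_of_nonneg h hK1n
        have h3 : (0:ℝ) ≤ (δ / r₁) * (12 * (Real.exp (-r₁) / Real.sqrt r₁)) := by positivity
        linarith
      · exact mul_le_mul h1A hb1 hK1n (by positivity)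
    calc Real.exp (r - r₀) * ((1 - A) * K1fn r₁)
        ≤ Real.exp (r - r₀) * ((δ / r₁) * (12 * (Real.exp (-r₁) / Real.sqrt r₁))) :=
          mul_le_mul_of_nonneg_left step1 (Real.exp_nonneg _)
      _ = 12 * (δ * (Real.exp (r - r₀) * Real.exp (-r₁))) / (r₁ * Real.sqrt r₁) := by ring
      _ = 12 * (δ * Real.exp (-δ)) / (r₁ * Real.sqrt r₁) := by rw [hEδ]
      _ ≤ 24 * Real.exp (-δ/2) / (r₁ * Real.sqrt r₁) := by
          have hsplit : Real.exp (-δ) = Real.exp (-δ/2) * Real.exp (-δ/2) := by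
            rw [← Real.exp_add]; congr 1; ring
          have hnum : 12 * (δ * Real.exp (-δ)) ≤ 24 * Real.exp (-δ/2) := by
            rw [hsplit]
            nlinarith [Real.exp_pos (-δ/2), hδe]
          exact div_le_div_of_nonneg_right hnum (by positivity)
  have hrpow : r₁ ^ (-(3/2:ℝ)) = (r₁ * Real.sqrt r₁)⁻¹ := by
    rw [Real.rpow_neg hr1pos.le, show (3/2:ℝ) = 1 + 1/2 by norm_num,
      Real.rpow_add hr1pos, Real.rpow_one, ← Real.sqrt_eq_rpow]
  have hexp2 : Real.exp ((r - r₁ - r₀)/2) = Real.exp (-δ/2) := by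
    congr 1
    rw [hδdef]; ring
  have hπ3 : (3:ℝ) < π := Real.pi_gt_three
  calc |1/(2*π) * (Real.exp (r - r₀) * (K0 r₁ - A * K1fn r₁))|
      = 1/(2*π) * (Real.exp (r - r₀) * |K0 r₁ - A * K1fn r₁|) := by
        rw [abs_mul, abs_mul, abs_of_pos (by positivity : (0:ℝ) < 1/(2*π)),
          abs_of_pos (Real.exp_pos _)]
    _ ≤ 1/(2*π) * (Real.exp (r - r₀) * ((K1fn r₁ - K0 r₁) + (1 - A) * K1fn r₁)) := by
        apply mul_le_mul_of_nonneg_left _ (by positivity)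
        exact mul_le_mul_of_nonneg_left habs (Real.exp_nonneg _)
    _ = 1/(2*π) * (Real.exp (r - r₀) * (K1fn r₁ - K0 r₁)
          + Real.exp (r - r₀) * ((1 - A) * K1fn r₁)) := by ring
    _ ≤ 1/(2*π) * (4 * Real.exp (-δ/2) / (r₁ * Real.sqrt r₁)
          + 24 * Real.exp (-δ/2) / (r₁ * Real.sqrt r₁)) := by
        apply mul_le_mul_of_nonneg_left (add_le_add hT1 hT2) (by positivity)
    _ = (28/(2*π)) * (Real.exp (-δ/2) / (r₁ * Real.sqrt r₁)) := by ring
    _ ≤ 5 * (Real.exp (-δ/2) / (r₁ * Real.sqrt r₁)) := by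
        apply mul_le_mul_of_nonneg_right _ (by positivity)
        rw [div_le_iff₀ (by positivity : (0:ℝ) < 2*π)]
        nlinarith
    _ = 5 * r₁ ^ (-(3/2:ℝ)) * Real.exp ((r - r₁ - r₀)/2) := by
        rw [hrpow, hexp2, div_eq_mul_inv]
        ring

end Aux
end

section
/- Let G(x) = (1/2π) e^{r cos θ} K₀(r) in polar coordinates (r, θ) on ℝ² \ {0}, the fundamental solution of the scalar Oseen operator Δ - 2∂₁. Then G satisfies ΔG - 2 ∂₁ G = 0 on ℝ² \ {0}. -/
open Real MeasureTheory

/-- The Laplacian of a function on the Euclidean plane, as the sum of the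
second partial derivatives in the two Cartesian coordinate directions. -/
noncomputable def laplacian (f : EuclideanSpace ℝ (Fin 2) → ℝ)
    (x : EuclideanSpace ℝ (Fin 2)) : ℝ :=
  ∑ i : Fin 2, fderiv ℝ (fun y => fderiv ℝ f y (EuclideanSpace.single i 1)) x
    (EuclideanSpace.single i 1)

section Aux
open Set Filter Topology


noncomputable def Kn (n : ℕ) (r : ℝ) : ℝ :=
  ∫ t in Set.Ioi (0 : ℝ), Real.cosh t ^ n * Real.exp (-r * Real.cosh t)

lemma cosh_ge_self {t : ℝ} (ht : 0 ≤ t) : t ≤ Real.cosh t := by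
  have h1 : Real.cosh t - Real.sinh t = Real.exp (-t) := by
    rw [Real.cosh_eq, Real.sinh_eq]; ring
  have := Real.self_le_sinh_iff.2 ht
  have := Real.exp_pos (-t)
  linarith

/-- Master pointwise bound. -/
lemma key_bound (n : ℕ) {c t r : ℝ} (hc : 0 < c) (ht : 0 ≤ t) (hr : c ≤ r) :
    Real.cosh t ^ n * Real.exp (-r * Real.cosh t) ≤
      (2 * n / c) ^ n * Real.exp (-(c / 2) * t) := by
  have hcosh1 : (1:ℝ) ≤ Real.cosh t := Real.one_le_cosh t
  have hcosh0 : (0:ℝ) < Real.cosh t := lt_of_lt_of_le one_pos hcosh1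
  have h1 : Real.exp (-r * Real.cosh t) ≤ Real.exp (-c * Real.cosh t) := by
    apply Real.exp_le_exp.2
    nlinarith
  have h2 : Real.exp (-c * Real.cosh t) =
      Real.exp (-(c/2) * Real.cosh t) * Real.exp (-(c/2) * Real.cosh t) := by
    rw [← Real.exp_add]; ring_nf
  have h3 : Real.cosh t ^ n * Real.exp (-(c/2) * Real.cosh t) ≤ (2 * n / c) ^ n := by
    rcases Nat.eq_zero_or_pos n with hn | hn
    · subst hn
      have : -(c/2) * Real.cosh t ≤ 0 := by nlinarith
      simpa using Real.exp_le_one_iff.2 this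
    · have hnpos : (0:ℝ) < n := by exact_mod_cast hn
      set u : ℝ := c * Real.cosh t / (2 * n) with hu
      have hu0 : 0 < u := by positivity
      have hule : u ≤ Real.exp u := (Real.add_one_le_exp u).trans' (by linarith)
      have hun : u ^ n ≤ Real.exp u ^ n := pow_le_pow_left₀ hu0.le hule n
      have hexp : Real.exp u ^ n = Real.exp ((c/2) * Real.cosh t) := by
        rw [← Real.exp_nat_mul]; congr 1; field_simp [hu]; rw [hu]; field_simp
      have hc' : Real.cosh t ^ n = (2 * n / c) ^ n * u ^ n := by
        rw [← mul_pow]; congr 1; field_simp [hu]; rw [hu]; field_simp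
      calc Real.cosh t ^ n * Real.exp (-(c/2) * Real.cosh t)
          = (2 * n / c) ^ n * (u ^ n * Real.exp (-(c/2) * Real.cosh t)) := by
            rw [hc']; ring
        _ ≤ (2 * n / c) ^ n * (Real.exp ((c/2) * Real.cosh t) * Real.exp (-(c/2) * Real.cosh t)) := by
            apply mul_le_mul_of_nonneg_left _ (by positivity)
            exact mul_le_mul_of_nonneg_right (hun.trans_eq hexp) (Real.exp_pos _).le
        _ = (2 * n / c) ^ n := by rw [← Real.exp_add]; simp
  have h4 : Real.exp (-(c/2) * Real.cosh t) ≤ Real.exp (-(c/2) * t) := by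
    apply Real.exp_le_exp.2
    have := cosh_ge_self ht
    nlinarith
  calc Real.cosh t ^ n * Real.exp (-r * Real.cosh t)
      ≤ Real.cosh t ^ n * Real.exp (-c * Real.cosh t) :=
        mul_le_mul_of_nonneg_left h1 (by positivity)
    _ = (Real.cosh t ^ n * Real.exp (-(c/2) * Real.cosh t)) * Real.exp (-(c/2) * Real.cosh t) := by
        rw [h2]; ring
    _ ≤ (2 * n / c) ^ n * Real.exp (-(c/2) * t) := by
        apply mul_le_mul h3 h4 (Real.exp_pos _).le
        positivity

lemma Kn_integrable (n : ℕ) {r : ℝ} (hr : 0 < r) :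
    IntegrableOn (fun t => Real.cosh t ^ n * Real.exp (-r * Real.cosh t)) (Ioi 0) := by
  apply Integrable.mono' ((exp_neg_integrableOn_Ioi 0 (by positivity : (0:ℝ) < r/2)).const_mul
    ((2 * n / r) ^ n))
  · exact ((Real.continuous_cosh.pow n).mul
      (Real.continuous_exp.comp (by continuity))).aestronglyMeasurable
  · filter_upwards [ae_restrict_mem measurableSet_Ioi] with t ht
    rw [Real.norm_eq_abs, abs_of_nonneg (by positivity)]
    exact key_bound n hr (le_of_lt ht) le_rfl

lemma Kn_hasDerivAt (n : ℕ) {r : ℝ} (hr : 0 < r) :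
    HasDerivAt (Kn n) (-(Kn (n+1) r)) r := by
  have hε : (0:ℝ) < r / 2 := by positivity
  have key := _root_.hasDerivAt_integral_of_dominated_loc_of_deriv_le (μ := volume.restrict (Ioi 0))
    (F := fun x t => Real.cosh t ^ n * Real.exp (-x * Real.cosh t))
    (F' := fun x t => -(Real.cosh t ^ (n+1) * Real.exp (-x * Real.cosh t)))
    (x₀ := r) (bound := fun t => (2 * (n+1) / (r/2)) ^ (n+1) * Real.exp (-(r/2/2) * t)) (Metric.ball_mem_nhds r hε)
    ?_ ?_ ?_ ?_ ?_ ?_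
  · have h2 := key.2
    rw [MeasureTheory.integral_neg] at h2
    exact h2
  · filter_upwards with x
    exact ((Real.continuous_cosh.pow n).mul
      (Real.continuous_exp.comp (by continuity))).aestronglyMeasurable
  · exact Kn_integrable n hr
  · exact (((Real.continuous_cosh.pow (n+1)).mul
      (Real.continuous_exp.comp (by continuity))).neg).aestronglyMeasurable
  · filter_upwards [ae_restrict_mem measurableSet_Ioi] with t ht x hx
    rw [Metric.mem_ball, Real.dist_eq, abs_lt] at hx
    rw [norm_neg, Real.norm_eq_abs, abs_of_nonneg (by positivity)]
    exact_mod_cast key_bound (n+1) (r := x) hε (le_of_lt ht) (by linarith [hx.1])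
  · exact (exp_neg_integrableOn_Ioi 0 (by positivity : (0:ℝ) < r/2/2)).const_mul _
  · filter_upwards with t x hx
    have h1 : HasDerivAt (fun x : ℝ => -x * Real.cosh t) (-Real.cosh t) x := by
      simpa using (hasDerivAt_id x).neg.mul_const (Real.cosh t)
    have h2 := (h1.exp).const_mul (Real.cosh t ^ n)
    refine h2.congr_deriv ?_
    ring





lemma sinh_sq_integrable {r : ℝ} (hr : 0 < r) :
    IntegrableOn (fun t => r * (Real.sinh t ^ 2 * Real.exp (-r * Real.cosh t))) (Ioi 0) := by
  apply Integrable.mono' ((Kn_integrable 2 hr).const_mul r)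
  · apply Continuous.aestronglyMeasurable; continuity
  · filter_upwards [ae_restrict_mem measurableSet_Ioi] with t _
    have h1 : Real.sinh t ^ 2 ≤ Real.cosh t ^ 2 := by
      rw [Real.sinh_sq]; linarith
    rw [Real.norm_eq_abs, abs_of_nonneg (by positivity)]
    exact mul_le_mul_of_nonneg_left
      (mul_le_mul_of_nonneg_right h1 (Real.exp_pos _).le) hr.le

lemma Kn_ode {r : ℝ} (hr : 0 < r) : Kn 2 r = Kn 0 r + Kn 1 r / r := by
  set f : ℝ → ℝ := fun t => Real.sinh t * Real.exp (-r * Real.cosh t) with hf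
  set f' : ℝ → ℝ := fun t =>
    Real.cosh t * Real.exp (-r * Real.cosh t)
      - r * (Real.sinh t ^ 2 * Real.exp (-r * Real.cosh t)) with hf'
  have hcosh_int : IntegrableOn (fun t => Real.cosh t * Real.exp (-r * Real.cosh t)) (Ioi 0) := by
    have := Kn_integrable 1 hr
    simpa [pow_one] using this
  have hderiv : ∀ t ∈ Ioi (0:ℝ), HasDerivAt f (f' t) t := by
    intro t _
    have h1 : HasDerivAt (fun t : ℝ => -r * Real.cosh t) (-r * Real.sinh t) t :=
      (Real.hasDerivAt_cosh t).const_mul (-r)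
    have h2 := (Real.hasDerivAt_sinh t).mul h1.exp
    refine h2.congr_deriv ?_
    simp [hf']; ring
  have hint : IntegrableOn f' (Ioi 0) := hcosh_int.sub (sinh_sq_integrable hr)
  have htend : Tendsto f atTop (nhds 0) := by
    refine squeeze_zero_norm' (a := fun t => (2 * 1 / r) ^ 1 * Real.exp (-(r/2) * t)) ?_ ?_
    · filter_upwards [eventually_ge_atTop (0:ℝ)] with t ht
      have hb := key_bound 1 hr ht (le_refl r)
      have habs : |Real.sinh t| ≤ Real.cosh t := by
        rw [abs_le, Real.cosh_eq, Real.sinh_eq]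
        have := Real.exp_pos t; have := Real.exp_pos (-t)
        constructor <;> linarith
      have h1 : ‖f t‖ ≤ Real.cosh t ^ 1 * Real.exp (-r * Real.cosh t) := by
        rw [Real.norm_eq_abs, hf, abs_mul, abs_of_nonneg (Real.exp_pos _).le, pow_one]
        exact mul_le_mul_of_nonneg_right habs (Real.exp_pos _).le
      exact h1.trans (by exact_mod_cast hb)
    · rw [show (0:ℝ) = (2 * 1 / r) ^ 1 * 0 by ring]
      apply Tendsto.const_mul
      have ha : Tendsto (fun t : ℝ => (r/2) * t) atTop atTop :=
        tendsto_id.const_mul_atTop (by linarith)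
      have hb : Tendsto (fun t : ℝ => -(r/2) * t) atTop atBot :=
        (tendsto_neg_atTop_atBot.comp ha).congr
          (fun t => by show -(r/2*t) = -(r/2)*t; ring)
      exact Real.tendsto_exp_atBot.comp hb
  have hcont : ContinuousWithinAt f (Ici 0) 0 := by
    apply Continuous.continuousWithinAt; continuity
  have key := MeasureTheory.integral_Ioi_of_hasDerivAt_of_tendsto hcont hderiv hint htend
  simp only [hf, Real.sinh_zero, zero_mul, sub_zero] at key
  have hsplit : (∫ t in Ioi (0:ℝ), f' t)
      = (∫ t in Ioi (0:ℝ), Real.cosh t * Real.exp (-r * Real.cosh t))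
        - ∫ t in Ioi (0:ℝ), r * (Real.sinh t ^ 2 * Real.exp (-r * Real.cosh t)) :=
    MeasureTheory.integral_sub hcosh_int (sinh_sq_integrable hr)
  have hsinh2 : (∫ t in Ioi (0:ℝ), r * (Real.sinh t ^ 2 * Real.exp (-r * Real.cosh t)))
      = r * (Kn 2 r - Kn 0 r) := by
    rw [MeasureTheory.integral_const_mul]
    congr 1
    have : ∀ t : ℝ, Real.sinh t ^ 2 * Real.exp (-r * Real.cosh t)
        = Real.cosh t ^ 2 * Real.exp (-r * Real.cosh t)
          - Real.cosh t ^ 0 * Real.exp (-r * Real.cosh t) := by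
      intro t; rw [Real.sinh_sq]; ring
    simp_rw [this]
    exact MeasureTheory.integral_sub (Kn_integrable 2 hr) (Kn_integrable 0 hr)
  have hK1 : (∫ t in Ioi (0:ℝ), Real.cosh t * Real.exp (-r * Real.cosh t)) = Kn 1 r := by
    simp [Kn, pow_one]
  rw [hsplit, hsinh2, hK1] at key
  field_simp
  linarith


noncomputable abbrev E2 := EuclideanSpace ℝ (Fin 2)

lemma norm_hasFDerivAt {x : E2} (hx : x ≠ 0) :
    HasFDerivAt (fun y : E2 => ‖y‖) (‖x‖⁻¹ • innerSL ℝ x) x := by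
  have hxn : ‖x‖ ≠ 0 := norm_ne_zero_iff.2 hx
  have hx2 : ‖x‖ ^ 2 ≠ 0 := pow_ne_zero _ hxn
  have h1 : HasFDerivAt (fun y : E2 => ‖y‖ ^ 2) (2 • innerSL ℝ x) x :=
    (hasStrictFDerivAt_norm_sq x).hasFDerivAt
  have h2 := (Real.hasDerivAt_sqrt hx2).comp_hasFDerivAt x h1
  have heq : (fun y : E2 => Real.sqrt (‖y‖ ^ 2)) = fun y : E2 => ‖y‖ := by
    funext y; rw [Real.sqrt_sq (norm_nonneg y)]
  simp only [Function.comp_def] at h2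
  rw [heq] at h2
  refine h2.congr_fderiv ?_
  rw [Real.sqrt_sq (norm_nonneg x)]
  ext v
  simp [smul_smul]
  field_simp

lemma coord_hasFDerivAt (i : Fin 2) (x : E2) :
    HasFDerivAt (fun y : E2 => y i) (PiLp.proj (𝕜 := ℝ) 2 (fun _ : Fin 2 => ℝ) i) x :=
  (PiLp.proj (𝕜 := ℝ) 2 (fun _ : Fin 2 => ℝ) i).hasFDerivAt

lemma K0_eq : K0 = Kn 0 := by
  funext r; simp [K0, Kn]

/-- The first-derivative continuous linear map of `G`. -/
noncomputable def L (c : ℝ) (y : E2) : E2 →L[ℝ] ℝ :=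
  (c * Real.exp (y 0) * Kn 0 ‖y‖) • (PiLp.proj (𝕜 := ℝ) 2 (fun _ : Fin 2 => ℝ) (0 : Fin 2)) +
    (c * Real.exp (y 0) * -(Kn 1 ‖y‖) * ‖y‖⁻¹) • innerSL ℝ y

lemma G_hasFDerivAt (c : ℝ) {y : E2} (hy : y ≠ 0) :
    HasFDerivAt (fun z : E2 => c * Real.exp (z 0) * Kn 0 ‖z‖) (L c y) y := by
  have hr : 0 < ‖y‖ := norm_pos_iff.2 hy
  have hN := norm_hasFDerivAt hy
  have hB := (Kn_hasDerivAt 0 hr).comp_hasFDerivAt y hN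
  have hexp := (Real.hasDerivAt_exp (y 0)).comp_hasFDerivAt y (coord_hasFDerivAt 0 y)
  have hA := hexp.const_mul c
  have hAB := hA.mul hB
  refine hAB.congr_fderiv ?_
  unfold L
  ext v
  simp [smul_smul]
  ring

end Aux

/-- The fundamental solution G(x) = (1/2π) e^{r cos θ} K₀(r) = (1/2π) e^{x₁} K₀(‖x‖)
of the scalar Oseen operator satisfies ΔG - 2 ∂₁ G = 0 on ℝ² \ {0}. -/
theorem stmt18 (x : EuclideanSpace ℝ (Fin 2)) (hx : x ≠ 0) :
    laplacian (fun y => (1 / (2 * π)) * Real.exp (y 0) * K0 ‖y‖) x -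
      2 * fderiv ℝ (fun y => (1 / (2 * π)) * Real.exp (y 0) * K0 ‖y‖) x
        (EuclideanSpace.single 0 1) = 0 := by
  have hr : (0:ℝ) < ‖x‖ := norm_pos_iff.2 hx
  set c : ℝ := 1 / (2 * π) with hc
  simp only [laplacian, K0_eq]
  -- eventually equal to the explicit first derivative
  have hne : ∀ᶠ z in nhds x, z ≠ (0 : E2) :=
    (isOpen_compl_singleton.eventually_mem (by simpa using hx))
  have hev : ∀ i : Fin 2,
      (fun z : E2 => fderiv ℝ (fun y : E2 => c * Real.exp (y 0) * Kn 0 ‖y‖) z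
        (EuclideanSpace.single i 1))
      =ᶠ[nhds x] fun z : E2 => L c z (EuclideanSpace.single i 1) := by
    intro i
    filter_upwards [hne] with z hz
    rw [(G_hasFDerivAt c hz).fderiv]
  -- pieces at x
  have hN := norm_hasFDerivAt hx
  have hB := (Kn_hasDerivAt 0 hr).comp_hasFDerivAt x hN
  have hK1 := (Kn_hasDerivAt 1 hr).comp_hasFDerivAt x hN
  have hexp := (Real.hasDerivAt_exp (x 0)).comp_hasFDerivAt x (coord_hasFDerivAt 0 x)
  have hA := hexp.const_mul c
  have hinv := (hasDerivAt_inv hr.ne').comp_hasFDerivAt x hN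
  have hy0 := coord_hasFDerivAt 0 x
  have hy1 := coord_hasFDerivAt 1 x
  -- second derivatives
  have hpsi0 := (hA.mul hB).add (((hA.mul hK1.neg).mul hinv).mul hy0)
  have hpsi1 := ((hA.mul hK1.neg).mul hinv).mul hy1
  have hL0 : (fun z : E2 => L c z (EuclideanSpace.single 0 1)) =
      fun z : E2 => (c * Real.exp (z 0)) * Kn 0 ‖z‖ +
        (((c * Real.exp (z 0)) * -(Kn 1 ‖z‖)) * ‖z‖⁻¹) * z 0 := by
    funext z
    simp [L, EuclideanSpace.inner_single_right, EuclideanSpace.single_apply]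
  have hL1 : (fun z : E2 => L c z (EuclideanSpace.single 1 1)) =
      fun z : E2 => (((c * Real.exp (z 0)) * -(Kn 1 ‖z‖)) * ‖z‖⁻¹) * z 1 := by
    funext z
    simp [L, EuclideanSpace.inner_single_right, EuclideanSpace.single_apply]
  simp only [Function.comp_def, Pi.mul_def, Pi.add_def, Pi.neg_def] at hpsi0 hpsi1
  rw [Fin.sum_univ_two, (hev 0).fderiv_eq, (hev 1).fderiv_eq, hL0, hL1,
    hpsi0.fderiv, hpsi1.fderiv, (G_hasFDerivAt c hx).fderiv]
  have hab : x 0 ^ 2 + x 1 ^ 2 = ‖x‖ ^ 2 := by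
    rw [EuclideanSpace.norm_eq, Real.sq_sqrt (by positivity)]
    simp [Fin.sum_univ_two]
  have hode := Kn_ode hr
  simp only [L, ContinuousLinearMap.add_apply, ContinuousLinearMap.smul_apply,
    ContinuousLinearMap.coe_smul', Pi.smul_apply, innerSL_apply_apply, PiLp.proj_apply,
    EuclideanSpace.inner_single_right, EuclideanSpace.single_apply,
    smul_eq_mul, conj_trivial]
  norm_num
  have hode' : Kn 2 ‖x‖ * ‖x‖ = Kn 0 ‖x‖ * ‖x‖ + Kn 1 ‖x‖ := by
    rw [hode]; field_simp
  field_simp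
  have hi0 : inner ℝ x (EuclideanSpace.single (0 : Fin 2) (1 : ℝ)) = x 0 := by
    simp [PiLp.inner_apply, Fin.sum_univ_two, EuclideanSpace.single_apply]
  have hi1 : inner ℝ x (EuclideanSpace.single (1 : Fin 2) (1 : ℝ)) = x 1 := by
    simp [PiLp.inner_apply, Fin.sum_univ_two, EuclideanSpace.single_apply]
  linear_combination (c * rexp (x 0) * (Kn 1 ‖x‖ + ‖x‖ * Kn 2 ‖x‖)) * hab + (c * rexp (x 0) * ‖x‖ ^ 2) * hode' + (c * rexp (x 0) * x 0 * ‖x‖ * Kn 2 ‖x‖) * hi0 + (c * rexp (x 0) * x 1 * ‖x‖ * Kn 2 ‖x‖) * hi1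
end
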